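/- For every odd integer n ≥ 3, T_n = Σ_{k odd, 1 ≤ k ≤ n−2} (n−1 choose k) · T_k · T_{n−1−k}, where T_m denotes the number of alternating permutations of {0,1,…,m−1}. -/

import Mathlib

/-- A permutation `σ` of `{0, 1, …, m−1}` is alternating if `σ 0 < σ 1 > σ 2 < σ 3 > …`,
i.e. `σ i < σ (i+1)` for even `i` and `σ i > σ (i+1)` for odd `i`. -/
def IsAlternating {m : ℕ} (σ : Equiv.Perm (Fin m)) : Prop :=
  ∀ (i : ℕ) (h : i + 1 < m),
    (Even i → σ ⟨i, Nat.lt_of_succ_lt h⟩ < σ ⟨i + 1, h⟩) ∧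
    (¬ Even i → σ ⟨i + 1, h⟩ < σ ⟨i, Nat.lt_of_succ_lt h⟩)

/-- `altCount m` is the number of alternating permutations of `{0, 1, …, m−1}`. -/
noncomputable def altCount (m : ℕ) : ℕ :=
  Nat.card {σ : Equiv.Perm (Fin m) // IsAlternating σ}

open Finset Equiv Function

section Aux

/-- Alternating condition for an arbitrary sequence. -/
def AltSeq {m : ℕ} {γ : Type*} [LT γ] (f : Fin m → γ) : Prop :=
  ∀ (i : ℕ) (h : i + 1 < m),
    (Even i → f ⟨i, Nat.lt_of_succ_lt h⟩ < f ⟨i + 1, h⟩) ∧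
    (¬ Even i → f ⟨i + 1, h⟩ < f ⟨i, Nat.lt_of_succ_lt h⟩)

lemma isAlternating_iff_altSeq {m : ℕ} (σ : Equiv.Perm (Fin m)) :
    IsAlternating σ ↔ AltSeq ⇑σ := Iff.rfl

lemma altSeq_iff_vals {m M N : ℕ} {f : Fin m → Fin M} {g : Fin m → Fin N}
    (h : ∀ i, (f i : ℕ) = (g i : ℕ)) : AltSeq f ↔ AltSeq g := by
  unfold AltSeq
  refine forall_congr' fun i => forall_congr' fun hi => ?_
  simp only [Fin.lt_def, h]

lemma altSeq_comp {m : ℕ} {γ δ : Type*} [LinearOrder γ] [Preorder δ] {g : γ → δ}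
    (hg : StrictMono g) (f : Fin m → γ) : AltSeq (fun i => g (f i)) ↔ AltSeq f := by
  unfold AltSeq
  refine forall_congr' fun i => forall_congr' fun hi => ?_
  simp only [hg.lt_iff_lt]

lemma orderEmbOfFin_congr {γ : Type*} [LinearOrder γ] {k : ℕ} {s t : Finset γ} (h : s = t)
    (hs : s.card = k) (ht : t.card = k) (i : Fin k) :
    s.orderEmbOfFin hs i = t.orderEmbOfFin ht i := by subst h; rfl


end Aux

section Main

variable {a b : ℕ}

/-- left positions -/
def pL (i : Fin a) : Fin (a + b + 1) := ⟨i.val, by have := i.isLt; omega⟩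

/-- middle position -/
def pM (a b : ℕ) : Fin (a + b + 1) := ⟨a, by omega⟩

/-- right positions -/
def pR (j : Fin b) : Fin (a + b + 1) := ⟨a + 1 + j.val, by have := j.isLt; omega⟩

variable (σ : Equiv.Perm (Fin (a + b + 1)))
variable (hσ : σ (pM a b) = ⟨a + b, by omega⟩)

include hσ in
lemma val_lt_of_ne_mid (x : Fin (a + b + 1)) (hx : x ≠ pM a b) : (σ x).val < a + b := by
  have h1 : σ x ≠ (⟨a + b, by omega⟩ : Fin (a + b + 1)) := by
    rw [← hσ]; exact fun h => hx (σ.injective h)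
  have h2 := (σ x).isLt
  have h3 : (σ x).val ≠ a + b := fun h => h1 (Fin.ext h)
  omega

def Lf (i : Fin a) : Fin (a + b) :=
  ⟨(σ (pL i)).val, val_lt_of_ne_mid σ hσ _ (by
    intro h
    have := congrArg Fin.val h
    simp only [pL, pM] at this
    have := i.isLt; omega)⟩

def Rf (j : Fin b) : Fin (a + b) :=
  ⟨(σ (pR j)).val, val_lt_of_ne_mid σ hσ _ (by
    intro h
    have := congrArg Fin.val h
    simp only [pR, pM] at this
    omega)⟩

lemma Lf_inj : Function.Injective (Lf σ hσ) := by
  intro i j h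
  have hv0 := congrArg Fin.val h
  have hv : (σ (pL i)).val = (σ (pL j)).val := hv0
  have := σ.injective (Fin.ext hv)
  have := congrArg Fin.val this
  simp only [pL] at this
  exact Fin.ext this

lemma Rf_inj : Function.Injective (Rf σ hσ) := by
  intro i j h
  have hv0 := congrArg Fin.val h
  have hv : (σ (pR i)).val = (σ (pR j)).val := hv0
  have := σ.injective (Fin.ext hv)
  have := congrArg Fin.val this
  simp only [pR] at this
  exact Fin.ext (by omega)

def Sf : Finset (Fin (a + b)) := Finset.image (Lf σ hσ) Finset.univ

lemma Sf_card : (Sf σ hσ).card = a := by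
  rw [Sf, Finset.card_image_of_injective _ (Lf_inj σ hσ), Finset.card_univ, Fintype.card_fin]

lemma Lf_mem_Sf (i : Fin a) : Lf σ hσ i ∈ Sf σ hσ :=
  Finset.mem_image_of_mem _ (Finset.mem_univ _)

lemma Rf_mem_compl (j : Fin b) : Rf σ hσ j ∈ (Sf σ hσ)ᶜ := by
  rw [Finset.mem_compl, Sf, Finset.mem_image]
  rintro ⟨i, -, h⟩
  have hv0 := congrArg Fin.val h
  have hv : (σ (pL i)).val = (σ (pR j)).val := hv0
  have := σ.injective (Fin.ext hv)
  have := congrArg Fin.val this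
  simp only [pL, pR] at this
  have := i.isLt; omega

lemma Sf_compl_card : (Sf σ hσ)ᶜ.card = b := by
  rw [Finset.card_compl, Sf_card, Fintype.card_fin]; omega

noncomputable def αf : Equiv.Perm (Fin a) :=
  Equiv.ofBijective
    (fun i => ((Sf σ hσ).orderIsoOfFin (Sf_card σ hσ)).symm ⟨Lf σ hσ i, Lf_mem_Sf σ hσ i⟩)
    (by
      rw [← Finite.injective_iff_bijective]
      intro i j h
      have := congrArg ((Sf σ hσ).orderIsoOfFin (Sf_card σ hσ)) h
      simp only [OrderIso.apply_symm_apply, Subtype.mk.injEq] at this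
      exact Lf_inj σ hσ this)

noncomputable def βf : Equiv.Perm (Fin b) :=
  Equiv.ofBijective
    (fun j => (((Sf σ hσ)ᶜ).orderIsoOfFin (Sf_compl_card σ hσ)).symm
      ⟨Rf σ hσ j, Rf_mem_compl σ hσ j⟩)
    (by
      rw [← Finite.injective_iff_bijective]
      intro i j h
      have := congrArg (((Sf σ hσ)ᶜ).orderIsoOfFin (Sf_compl_card σ hσ)) h
      simp only [OrderIso.apply_symm_apply, Subtype.mk.injEq] at this
      exact Rf_inj σ hσ this)

lemma emb_αf (i : Fin a) :
    (Sf σ hσ).orderEmbOfFin (Sf_card σ hσ) (αf σ hσ i) = Lf σ hσ i := by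
  rw [αf]
  simp only [Equiv.ofBijective_apply, ← Finset.coe_orderIsoOfFin_apply,
    OrderIso.apply_symm_apply]

lemma emb_βf (j : Fin b) :
    ((Sf σ hσ)ᶜ).orderEmbOfFin (Sf_compl_card σ hσ) (βf σ hσ j) = Rf σ hσ j := by
  rw [βf]
  simp only [Equiv.ofBijective_apply, ← Finset.coe_orderIsoOfFin_apply,
    OrderIso.apply_symm_apply]

lemma alt_αf (halt : IsAlternating σ) : IsAlternating (αf σ hσ) := by
  rw [isAlternating_iff_altSeq]
  rw [← altSeq_comp ((Sf σ hσ).orderEmbOfFin (Sf_card σ hσ)).strictMono ⇑(αf σ hσ)]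
  have : (fun i => (Sf σ hσ).orderEmbOfFin (Sf_card σ hσ) (αf σ hσ i)) = Lf σ hσ := by
    funext i; exact emb_αf σ hσ i
  rw [this]
  rw [altSeq_iff_vals (f := Lf σ hσ) (g := fun i : Fin a => σ (pL i)) (fun i => rfl)]
  intro i h
  exact halt i (by omega)

lemma alt_βf (hodd : Odd a) (halt : IsAlternating σ) : IsAlternating (βf σ hσ) := by
  rw [isAlternating_iff_altSeq]
  rw [← altSeq_comp (((Sf σ hσ)ᶜ).orderEmbOfFin (Sf_compl_card σ hσ)).strictMono ⇑(βf σ hσ)]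
  have : (fun j => ((Sf σ hσ)ᶜ).orderEmbOfFin (Sf_compl_card σ hσ) (βf σ hσ j)) = Rf σ hσ := by
    funext j; exact emb_βf σ hσ j
  rw [this]
  rw [altSeq_iff_vals (f := Rf σ hσ) (g := fun j : Fin b => σ (pR j)) (fun j => rfl)]
  intro j hj
  have ha2 : a % 2 = 1 := Nat.odd_iff.mp hodd
  have hpar : Even (a + 1 + j) ↔ Even j := by rw [Nat.even_iff, Nat.even_iff]; omega
  have := halt (a + 1 + j) (by omega)
  constructor
  · intro he; exact this.1 (hpar.mpr he)
  · intro he; exact this.2 (fun hc => he (hpar.mp hc))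

end Main

section Back

variable {a b : ℕ}

/-- backward raw function -/
noncomputable def bwdFun (S : Finset (Fin (a + b))) (hS : S.card = a)
    (hSc : Sᶜ.card = b) (α : Equiv.Perm (Fin a)) (β : Equiv.Perm (Fin b)) :
    Fin (a + b + 1) → Fin (a + b + 1) := fun i =>
  if h : i.val < a then Fin.castSucc (S.orderEmbOfFin hS (α ⟨i.val, h⟩))
  else if h2 : i.val = a then Fin.last (a + b)
  else Fin.castSucc (Sᶜ.orderEmbOfFin hSc (β ⟨i.val - a - 1, by have := i.isLt; omega⟩))

lemma bwdFun_inj (S : Finset (Fin (a + b))) (hS : S.card = a)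
    (hSc : Sᶜ.card = b) (α : Equiv.Perm (Fin a)) (β : Equiv.Perm (Fin b)) :
    Function.Injective (bwdFun S hS hSc α β) := by
  intro x y h
  simp only [bwdFun] at h
  rcases Nat.lt_trichotomy x.val a with hx|hx|hx <;>
    rcases Nat.lt_trichotomy y.val a with hy|hy|hy
  all_goals first
    | (exact Fin.ext (by omega))
    | skip
  · rw [dif_pos hx, dif_pos hy] at h
    have h2 := α.injective ((S.orderEmbOfFin hS).injective (Fin.castSucc_injective _ h))
    rw [Fin.mk.injEq] at h2
    exact Fin.ext h2
  · have hy1 : ¬ y.val < a := by omega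
    rw [dif_pos hx, dif_neg hy1, dif_pos hy] at h
    exact absurd h (ne_of_lt (Fin.castSucc_lt_last _))
  · have hy1 : ¬ y.val < a := by omega
    have hy2 : ¬ y.val = a := by omega
    rw [dif_pos hx, dif_neg hy1, dif_neg hy2] at h
    have h1 := Fin.castSucc_injective _ h
    have m1 := Finset.orderEmbOfFin_mem S hS (α ⟨x.val, hx⟩)
    have m2 := Finset.orderEmbOfFin_mem Sᶜ hSc (β ⟨y.val - a - 1, by have := y.isLt; omega⟩)
    rw [h1] at m1
    exact absurd m1 (Finset.mem_compl.mp m2)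
  · have hx1 : ¬ x.val < a := by omega
    rw [dif_neg hx1, dif_pos hx, dif_pos hy] at h
    exact absurd h.symm (ne_of_lt (Fin.castSucc_lt_last _))
  · have hx1 : ¬ x.val < a := by omega
    have hy1 : ¬ y.val < a := by omega
    have hy2 : ¬ y.val = a := by omega
    rw [dif_neg hx1, dif_pos hx, dif_neg hy1, dif_neg hy2] at h
    exact absurd h.symm (ne_of_lt (Fin.castSucc_lt_last _))
  · have hx1 : ¬ x.val < a := by omega
    have hx2 : ¬ x.val = a := by omega
    rw [dif_neg hx1, dif_neg hx2, dif_pos hy] at h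
    have h1 := Fin.castSucc_injective _ h
    have m1 := Finset.orderEmbOfFin_mem S hS (α ⟨y.val, hy⟩)
    have m2 := Finset.orderEmbOfFin_mem Sᶜ hSc (β ⟨x.val - a - 1, by have := x.isLt; omega⟩)
    rw [← h1] at m1
    exact absurd m1 (Finset.mem_compl.mp m2)
  · have hx1 : ¬ x.val < a := by omega
    have hx2 : ¬ x.val = a := by omega
    have hy1 : ¬ y.val < a := by omega
    rw [dif_neg hx1, dif_neg hx2, dif_neg hy1, dif_pos hy] at h
    exact absurd h (ne_of_lt (Fin.castSucc_lt_last _))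
  · have hx1 : ¬ x.val < a := by omega
    have hx2 : ¬ x.val = a := by omega
    have hy1 : ¬ y.val < a := by omega
    have hy2 : ¬ y.val = a := by omega
    rw [dif_neg hx1, dif_neg hx2, dif_neg hy1, dif_neg hy2] at h
    have h2 := β.injective ((Sᶜ.orderEmbOfFin hSc).injective (Fin.castSucc_injective _ h))
    rw [Fin.mk.injEq] at h2
    exact Fin.ext (by omega)

noncomputable def bwd (S : Finset (Fin (a + b))) (hS : S.card = a)
    (hSc : Sᶜ.card = b) (α : Equiv.Perm (Fin a)) (β : Equiv.Perm (Fin b)) :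
    Equiv.Perm (Fin (a + b + 1)) :=
  Equiv.ofBijective _ (Finite.injective_iff_bijective.1 (bwdFun_inj S hS hSc α β))

lemma bwd_apply_lt (S : Finset (Fin (a + b))) (hS : S.card = a)
    (hSc : Sᶜ.card = b) (α : Equiv.Perm (Fin a)) (β : Equiv.Perm (Fin b))
    (x : Fin (a + b + 1)) (h : x.val < a) :
    bwd S hS hSc α β x = Fin.castSucc (S.orderEmbOfFin hS (α ⟨x.val, h⟩)) := by
  simp only [bwd, Equiv.ofBijective_apply, bwdFun, dif_pos h]

lemma bwd_apply_mid (S : Finset (Fin (a + b))) (hS : S.card = a)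
    (hSc : Sᶜ.card = b) (α : Equiv.Perm (Fin a)) (β : Equiv.Perm (Fin b))
    (x : Fin (a + b + 1)) (h : x.val = a) :
    bwd S hS hSc α β x = Fin.last (a + b) := by
  simp only [bwd, Equiv.ofBijective_apply, bwdFun, dif_neg (by omega : ¬ x.val < a), dif_pos h]

lemma bwd_apply_gt (S : Finset (Fin (a + b))) (hS : S.card = a)
    (hSc : Sᶜ.card = b) (α : Equiv.Perm (Fin a)) (β : Equiv.Perm (Fin b))
    (x : Fin (a + b + 1)) (h : a < x.val) :
    bwd S hS hSc α β x = Fin.castSucc (Sᶜ.orderEmbOfFin hSc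
      (β ⟨x.val - a - 1, by have := x.isLt; omega⟩)) := by
  simp only [bwd, Equiv.ofBijective_apply, bwdFun, dif_neg (by omega : ¬ x.val < a),
    dif_neg (by omega : ¬ x.val = a)]

lemma bwd_alt (hodd : Odd a) (S : Finset (Fin (a + b))) (hS : S.card = a)
    (hSc : Sᶜ.card = b) (α : Equiv.Perm (Fin a)) (β : Equiv.Perm (Fin b))
    (hα : IsAlternating α) (hβ : IsAlternating β) :
    IsAlternating (bwd S hS hSc α β) := by
  intro i h
  have ha2 : a % 2 = 1 := Nat.odd_iff.mp hodd
  by_cases h1 : i + 1 < a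
  · rw [bwd_apply_lt S hS hSc α β ⟨i, Nat.lt_of_succ_lt h⟩ (show i < a by omega),
      bwd_apply_lt S hS hSc α β ⟨i + 1, h⟩ (show i + 1 < a by omega)]
    simp only [Fin.castSucc_lt_castSucc_iff, OrderEmbedding.lt_iff_lt]
    exact hα i h1
  · by_cases h2 : i + 1 = a
    · rw [bwd_apply_lt S hS hSc α β ⟨i, Nat.lt_of_succ_lt h⟩ (show i < a by omega),
        bwd_apply_mid S hS hSc α β ⟨i + 1, h⟩ (show i + 1 = a by omega)]
      constructor
      · intro _; exact Fin.castSucc_lt_last _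
      · intro hni; exact absurd (Nat.even_iff.mpr (by omega)) hni
    · by_cases h3 : i = a
      · rw [bwd_apply_mid S hS hSc α β ⟨i, Nat.lt_of_succ_lt h⟩ (show i = a by omega),
          bwd_apply_gt S hS hSc α β ⟨i + 1, h⟩ (show a < i + 1 by omega)]
        constructor
        · intro hev; rw [Nat.even_iff] at hev; omega
        · intro _; exact Fin.castSucc_lt_last _
      · have hgt : a < i := by omega
        rw [bwd_apply_gt S hS hSc α β ⟨i, Nat.lt_of_succ_lt h⟩ (show a < i by omega),
          bwd_apply_gt S hS hSc α β ⟨i + 1, h⟩ (show a < i + 1 by omega)]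
        simp only [Fin.castSucc_lt_castSucc_iff, OrderEmbedding.lt_iff_lt]
        have hj : (i - a - 1) + 1 < b := by omega
        have hidx : (⟨(⟨i + 1, h⟩ : Fin (a + b + 1)).val - a - 1,
            show i + 1 - a - 1 < b by omega⟩ : Fin b) = ⟨i - a - 1 + 1, hj⟩ :=
          Fin.ext (show i + 1 - a - 1 = i - a - 1 + 1 by omega)
        rw [hidx]
        have hβj := hβ (i - a - 1) hj
        have hpar : Even i ↔ Even (i - a - 1) := by rw [Nat.even_iff, Nat.even_iff]; omega
        constructor
        · intro he; exact hβj.1 (hpar.mp he)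
        · intro he; exact hβj.2 (fun hc => he (hpar.mpr hc))

lemma Sf_bwd (S : Finset (Fin (a + b))) (hS : S.card = a)
    (hSc : Sᶜ.card = b) (α : Equiv.Perm (Fin a)) (β : Equiv.Perm (Fin b))
    (hσ' : bwd S hS hSc α β (pM a b) = ⟨a + b, by omega⟩) :
    Sf (bwd S hS hSc α β) hσ' = S := by
  have key : ∀ i : Fin a, Lf (bwd S hS hSc α β) hσ' i = S.orderEmbOfFin hS (α i) := by
    intro i
    apply Fin.ext
    show ((bwd S hS hSc α β) (pL i)).val = _
    rw [bwd_apply_lt S hS hSc α β (pL i) (show i.val < a from i.isLt)]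
    show (S.orderEmbOfFin hS (α ⟨i.val, i.isLt⟩)).val = _
    congr
  ext x
  simp only [Sf, Finset.mem_image, Finset.mem_univ, true_and]
  constructor
  · rintro ⟨i, rfl⟩
    rw [key]
    exact Finset.orderEmbOfFin_mem S hS (α i)
  · intro hx
    have : x ∈ Set.range (S.orderEmbOfFin hS) := by
      rw [Finset.range_orderEmbOfFin]; exact hx
    obtain ⟨i, hi⟩ := this
    exact ⟨α.symm i, by rw [key, Equiv.apply_symm_apply]; exact hi⟩

lemma αf_bwd (S : Finset (Fin (a + b))) (hS : S.card = a)
    (hSc : Sᶜ.card = b) (α : Equiv.Perm (Fin a)) (β : Equiv.Perm (Fin b))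
    (hσ' : bwd S hS hSc α β (pM a b) = ⟨a + b, by omega⟩) :
    αf (bwd S hS hSc α β) hσ' = α := by
  have key : ∀ i : Fin a, Lf (bwd S hS hSc α β) hσ' i = S.orderEmbOfFin hS (α i) := by
    intro i
    apply Fin.ext
    show ((bwd S hS hSc α β) (pL i)).val = _
    rw [bwd_apply_lt S hS hSc α β (pL i) (show i.val < a from i.isLt)]
    show (S.orderEmbOfFin hS (α ⟨i.val, i.isLt⟩)).val = _
    congr
  apply Equiv.ext
  intro i
  have h1 := emb_αf (bwd S hS hSc α β) hσ' i
  rw [key i] at h1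
  have h2 := orderEmbOfFin_congr (Sf_bwd S hS hSc α β hσ')
    (Sf_card (bwd S hS hSc α β) hσ') hS (αf (bwd S hS hSc α β) hσ' i)
  exact (S.orderEmbOfFin hS).injective (h2.symm.trans h1)

lemma βf_bwd (S : Finset (Fin (a + b))) (hS : S.card = a)
    (hSc : Sᶜ.card = b) (α : Equiv.Perm (Fin a)) (β : Equiv.Perm (Fin b))
    (hσ' : bwd S hS hSc α β (pM a b) = ⟨a + b, by omega⟩) :
    βf (bwd S hS hSc α β) hσ' = β := by
  have key : ∀ j : Fin b, Rf (bwd S hS hSc α β) hσ' j = Sᶜ.orderEmbOfFin hSc (β j) := by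
    intro j
    apply Fin.ext
    show ((bwd S hS hSc α β) (pR j)).val = _
    rw [bwd_apply_gt S hS hSc α β (pR j) (show a < a + 1 + j.val by omega)]
    show (Sᶜ.orderEmbOfFin hSc (β ⟨a + 1 + j.val - a - 1, _⟩)).val = _
    have : (⟨a + 1 + j.val - a - 1, show a + 1 + j.val - a - 1 < b by have := j.isLt; omega⟩ :
        Fin b) = j := Fin.ext (show a + 1 + j.val - a - 1 = j.val by omega)
    rw [this]
  apply Equiv.ext
  intro j
  have h1 := emb_βf (bwd S hS hSc α β) hσ' j
  rw [key j] at h1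
  have h2 := orderEmbOfFin_congr (congrArg compl (Sf_bwd S hS hSc α β hσ'))
    (Sf_compl_card (bwd S hS hSc α β) hσ') hSc (βf (bwd S hS hSc α β) hσ' j)
  exact (Sᶜ.orderEmbOfFin hSc).injective (h2.symm.trans h1)


end Back

section Together

variable {a b : ℕ}
variable (σ : Equiv.Perm (Fin (a + b + 1)))
variable (hσ : σ (pM a b) = ⟨a + b, by omega⟩)

lemma bwd_left_inv :
    bwd (Sf σ hσ) (Sf_card σ hσ) (Sf_compl_card σ hσ) (αf σ hσ) (βf σ hσ) = σ := by
  apply Equiv.ext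
  intro x
  rcases Nat.lt_trichotomy x.val a with hx|hx|hx
  · rw [bwd_apply_lt _ _ _ _ _ x hx, emb_αf σ hσ ⟨x.val, hx⟩]
    apply Fin.ext
    show ((Lf σ hσ ⟨x.val, hx⟩ : Fin (a + b)) : ℕ) = (σ x).val
    show (σ (pL ⟨x.val, hx⟩)).val = (σ x).val
    have : pL (a := a) (b := b) ⟨x.val, hx⟩ = x := Fin.ext rfl
    rw [this]
  · rw [bwd_apply_mid _ _ _ _ _ x hx]
    have hx2 : x = pM a b := Fin.ext hx
    rw [hx2, hσ]
    exact Fin.ext rfl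
  · rw [bwd_apply_gt _ _ _ _ _ x hx,
      emb_βf σ hσ ⟨x.val - a - 1, by have := x.isLt; omega⟩]
    apply Fin.ext
    show (σ (pR ⟨x.val - a - 1, by have := x.isLt; omega⟩)).val = (σ x).val
    have : pR (a := a) ⟨x.val - a - 1, by have := x.isLt; omega⟩ = x :=
      Fin.ext (show a + 1 + (x.val - a - 1) = x.val by omega)
    rw [this]

end Together

lemma fiber_card (a b : ℕ) (ha : Odd a) (hb : Odd b) :
    Nat.card {σ : Equiv.Perm (Fin (a + b + 1)) //
        IsAlternating σ ∧ σ (pM a b) = ⟨a + b, by omega⟩} =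
      (a + b).choose a * altCount a * altCount b := by
  classical
  have hSc : ∀ (S : Finset (Fin (a + b))), S.card = a → Sᶜ.card = b := by
    intro S hS
    rw [Finset.card_compl, hS, Fintype.card_fin]
    omega
  have e : {σ : Equiv.Perm (Fin (a + b + 1)) //
        IsAlternating σ ∧ σ (pM a b) = ⟨a + b, by omega⟩} ≃
      ({S : Finset (Fin (a + b)) // S.card = a} ×
        {α : Equiv.Perm (Fin a) // IsAlternating α} ×
        {β : Equiv.Perm (Fin b) // IsAlternating β}) :=
    { toFun := fun p => ⟨⟨Sf p.1 p.2.2, Sf_card p.1 p.2.2⟩,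
        ⟨αf p.1 p.2.2, alt_αf p.1 p.2.2 p.2.1⟩,
        ⟨βf p.1 p.2.2, alt_βf p.1 p.2.2 ha p.2.1⟩⟩
      invFun := fun t => ⟨bwd t.1.1 t.1.2 (hSc t.1.1 t.1.2) t.2.1.1 t.2.2.1,
        bwd_alt ha t.1.1 t.1.2 (hSc t.1.1 t.1.2) t.2.1.1 t.2.2.1 t.2.1.2 t.2.2.2,
        (bwd_apply_mid t.1.1 t.1.2 (hSc t.1.1 t.1.2) t.2.1.1 t.2.2.1 (pM a b) rfl).trans
          (Fin.ext rfl)⟩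
      left_inv := fun p => Subtype.ext (bwd_left_inv p.1 p.2.2)
      right_inv := by
        rintro ⟨⟨S, hS⟩, ⟨α, hα⟩, ⟨β, hβ⟩⟩
        refine Prod.ext (Subtype.ext ?_) (Prod.ext (Subtype.ext ?_) (Subtype.ext ?_))
        · exact Sf_bwd S hS _ α β _
        · exact αf_bwd S hS _ α β _
        · exact βf_bwd S hS _ α β _ }
  rw [Nat.card_congr e, Nat.card_prod, Nat.card_prod]
  have c1 : Nat.card {S : Finset (Fin (a + b)) // S.card = a} = (a + b).choose a := by
    rw [Nat.card_eq_fintype_card]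
    simpa using Fintype.card_finset_len (α := Fin (a + b)) a
  rw [c1, mul_assoc]
  rfl



lemma pos_odd {n : ℕ} (hn : 3 ≤ n) (hodd : Odd n) (σ : Equiv.Perm (Fin n))
    (halt : IsAlternating σ) :
    Odd (σ.symm ⟨n - 1, by omega⟩ : Fin n).val := by
  set p := (σ.symm ⟨n - 1, by omega⟩ : Fin n) with hp
  have hσp : σ p = ⟨n - 1, by omega⟩ := Equiv.apply_symm_apply σ _
  rw [Nat.odd_iff]
  by_contra hev
  have hev' : Even p.val := Nat.even_iff.mpr (by omega)
  by_cases hlt : p.val + 1 < n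
  · have h1 := (halt p.val hlt).1 hev'
    have he : (⟨p.val, Nat.lt_of_succ_lt hlt⟩ : Fin n) = p := Fin.ext rfl
    rw [he, hσp] at h1
    have h3 : n - 1 < (σ ⟨p.val + 1, hlt⟩).val := h1
    have h2 := (σ ⟨p.val + 1, hlt⟩).isLt
    omega
  · have hpval : p.val = n - 1 := by have := p.isLt; omega
    have hstep : n - 2 + 1 < n := by omega
    have hodd2 : ¬ Even (n - 2) := by
      rw [Nat.even_iff]; rw [Nat.odd_iff] at hodd; omega
    have h1 := (halt (n - 2) hstep).2 hodd2
    have he : (⟨n - 2 + 1, hstep⟩ : Fin n) = p := Fin.ext (show n - 2 + 1 = p.val by omega)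
    rw [he, hσp] at h1
    have h3 : n - 1 < (σ ⟨n - 2, by omega⟩).val := h1
    have h2 := (σ ⟨n - 2, by omega⟩ : Fin n).isLt
    omega

theorem altCount_recurrence (n : ℕ) (hn : 3 ≤ n) (hodd : Odd n) :
    altCount n =
      ∑ k ∈ (Finset.Icc 1 (n - 2)).filter (fun k => Odd k),
        (n - 1).choose k * altCount k * altCount (n - 1 - k) := by
  classical
  have huniv : altCount n =
      (Finset.univ.filter (fun σ : Equiv.Perm (Fin n) => IsAlternating σ)).card := by
    rw [altCount, Nat.card_eq_fintype_card, Fintype.card_subtype]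
  rw [huniv, Finset.card_eq_sum_card_fiberwise
      (f := fun σ : Equiv.Perm (Fin n) => (σ.symm ⟨n - 1, by omega⟩ : Fin n).val)
      (t := (Finset.Icc 1 (n - 2)).filter (fun k => Odd k)) ?memt]
  case memt =>
    intro σ hσ
    simp only [Finset.mem_coe, Finset.mem_filter] at hσ
    have hodp := pos_odd hn hodd σ hσ.2
    have hlt := (σ.symm ⟨n - 1, by omega⟩ : Fin n).isLt
    simp only [Finset.mem_coe, Finset.mem_filter, Finset.mem_Icc]
    have ho1 := Nat.odd_iff.mp hodp
    have ho2 := Nat.odd_iff.mp hodd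
    exact ⟨⟨by omega, by omega⟩, hodp⟩
  refine Finset.sum_congr rfl (fun k hk => ?_)
  simp only [Finset.mem_filter, Finset.mem_Icc] at hk
  obtain ⟨⟨hk1, hk2⟩, hk3⟩ := hk
  obtain ⟨b, rfl⟩ : ∃ b, n = k + b + 1 := ⟨n - 1 - k, by omega⟩
  have hb : Odd b := by rw [Nat.odd_iff] at hodd hk3 ⊢; omega
  simp only [Nat.add_sub_cancel, Nat.add_sub_cancel_left]
  rw [← fiber_card k b hk3 hb, Nat.card_eq_fintype_card, Fintype.card_subtype,
    Finset.filter_filter]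
  congr 1
  apply Finset.filter_congr
  intro σ _
  have hcond : (σ.symm ⟨k + b, by omega⟩ : Fin (k + b + 1)).val = k ↔
      σ (pM k b) = ⟨k + b, by omega⟩ := by
    constructor
    · intro h
      have h2 : σ.symm ⟨k + b, by omega⟩ = pM k b := Fin.ext h
      rw [← h2, Equiv.apply_symm_apply]
    · intro h
      rw [← h, Equiv.symm_apply_apply]
      rfl
  rw [and_congr_right_iff]
  intro _
  exact hcond
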